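/- Let d ≥ 2, let y₁, …, yₙ ∈ ℝ^d be mutually distinct with cⱼ ∈ ℂ \ {0}, and similarly ỹ₁, …, ỹₘ mutually distinct with c̃ⱼ ∈ ℂ \ {0}. If Σⱼ cⱼ·exp(i·yⱼ·θ) = Σⱼ c̃ⱼ·exp(i·ỹⱼ·θ) for all θ ∈ S^{d-1}, then n = m and the finite sets of pairs {(yⱼ, cⱼ)} and {(ỹⱼ, c̃ⱼ)} coincide. -/

import Mathlib

open scoped RealInnerProductSpace
open MeasureTheory Filter Topology



private lemma exists_unit_inner_ne (d : ℕ) (hd : 1 ≤ d)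
    (w : Finset (EuclideanSpace ℝ (Fin d))) (hw : (0 : EuclideanSpace ℝ (Fin d)) ∉ w) :
    ∃ v : EuclideanSpace ℝ (Fin d), ‖v‖ = 1 ∧ ∀ z ∈ w, ⟪z, v⟫ ≠ 0 := by
  classical
  haveI : Nonempty (Fin d) := ⟨⟨0, by omega⟩⟩
  have hvol : (volume : Measure (EuclideanSpace ℝ (Fin d)))
      (((⊥ : Submodule ℝ (EuclideanSpace ℝ (Fin d))) : Set (EuclideanSpace ℝ (Fin d))) ∪
        ⋃ z ∈ (w : Set (EuclideanSpace ℝ (Fin d))), {v | ⟪z, v⟫ = 0}) = 0 := by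
    refine le_antisymm (le_trans (measure_union_le _ _) ?_) (zero_le)
    have h1 : (volume : Measure (EuclideanSpace ℝ (Fin d)))
        ((⊥ : Submodule ℝ (EuclideanSpace ℝ (Fin d))) : Set (EuclideanSpace ℝ (Fin d))) = 0 :=
      Measure.addHaar_submodule _ _ bot_ne_top
    have h2 : (volume : Measure (EuclideanSpace ℝ (Fin d)))
        (⋃ z ∈ (w : Set (EuclideanSpace ℝ (Fin d))), {v | ⟪z, v⟫ = 0}) = 0 := by
      refine measure_biUnion_null_iff w.countable_toSet |>.2 ?_
      intro z hz
      have hz0 : z ≠ 0 := fun h => hw (h ▸ Finset.mem_coe.1 hz)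
      have heq : {v : EuclideanSpace ℝ (Fin d) | ⟪z, v⟫ = 0} =
          ((Submodule.span ℝ {z})ᗮ : Set (EuclideanSpace ℝ (Fin d))) := by
        ext v
        simp only [Set.mem_setOf_eq, SetLike.mem_coe,
          Submodule.mem_orthogonal_singleton_iff_inner_left]
        rw [real_inner_comm]
      rw [heq]
      refine Measure.addHaar_submodule _ _ ?_
      intro htop
      have hmem : z ∈ (Submodule.span ℝ {z})ᗮ := htop ▸ Submodule.mem_top
      exact hz0 (inner_self_eq_zero.1
        (Submodule.mem_orthogonal_singleton_iff_inner_left.1 hmem))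
    rw [h1, h2, add_zero]
  have huniv : (volume : Measure (EuclideanSpace ℝ (Fin d))) Set.univ ≠ 0 :=
    (isOpen_univ.measure_pos volume ⟨0, trivial⟩).ne'
  have hns : ¬ (Set.univ : Set (EuclideanSpace ℝ (Fin d))) ⊆
      ((⊥ : Submodule ℝ (EuclideanSpace ℝ (Fin d))) : Set (EuclideanSpace ℝ (Fin d))) ∪
        ⋃ z ∈ (w : Set (EuclideanSpace ℝ (Fin d))), {v | ⟪z, v⟫ = 0} := fun hsub =>
    huniv (measure_mono_null hsub hvol)
  obtain ⟨v₀, -, hv₀⟩ := Set.not_subset.1 hns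
  simp only [Set.mem_union, SetLike.mem_coe, Submodule.mem_bot, Set.mem_iUnion,
    Set.mem_setOf_eq, not_or, not_exists] at hv₀
  obtain ⟨hv₀0, hv₀w⟩ := hv₀
  refine ⟨‖v₀‖⁻¹ • v₀, ?_, ?_⟩
  · rw [norm_smul, norm_inv, norm_norm, inv_mul_cancel₀ (norm_ne_zero_iff.2 hv₀0)]
  · intro z hz
    rw [real_inner_smul_right]
    exact mul_ne_zero (inv_ne_zero (norm_ne_zero_iff.2 hv₀0)) (hv₀w z (Finset.mem_coe.2 hz))

private lemma exists_unit_orthogonal (d : ℕ) (hd : 2 ≤ d) (v : EuclideanSpace ℝ (Fin d)) :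
    ∃ u : EuclideanSpace ℝ (Fin d), ‖u‖ = 1 ∧ ⟪u, v⟫ = 0 := by
  haveI : Nonempty (Fin d) := ⟨⟨0, by omega⟩⟩
  have hne : (Submodule.span ℝ {v})ᗮ ≠ ⊥ := by
    intro hbot
    have htop : Submodule.span ℝ {v} = ⊤ := Submodule.orthogonal_eq_bot_iff.1 hbot
    by_cases hv : v = 0
    · rw [hv, Submodule.span_zero_singleton] at htop
      exact bot_ne_top htop
    · have h1 : Module.finrank ℝ (Submodule.span ℝ {v}) = 1 := finrank_span_singleton hv
      rw [htop] at h1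
      have h2 : Module.finrank ℝ
          (⊤ : Submodule ℝ (EuclideanSpace ℝ (Fin d))) = d := by
        rw [finrank_top]; simp
      omega
  obtain ⟨u₀, hu₀mem, hu₀0⟩ := Submodule.ne_bot_iff _ |>.1 hne
  refine ⟨‖u₀‖⁻¹ • u₀, ?_, ?_⟩
  · rw [norm_smul, norm_inv, norm_norm, inv_mul_cancel₀ (norm_ne_zero_iff.2 hu₀0)]
  · rw [real_inner_smul_left,
      Submodule.mem_orthogonal_singleton_iff_inner_left.1 hu₀mem, mul_zero]

private lemma key_indep (d : ℕ) (hd : 2 ≤ d) {ι : Type} [Fintype ι]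
    (z : ι → EuclideanSpace ℝ (Fin d)) (hz : Function.Injective z) (a : ι → ℂ)
    (H : ∀ θ : EuclideanSpace ℝ (Fin d), ‖θ‖ = 1 →
      ∑ i, a i * Complex.exp (Complex.I * (⟪z i, θ⟫ : ℝ)) = 0) :
    ∀ i, a i = 0 := by
  classical
  by_contra hne
  push_neg at hne
  obtain ⟨i₁, hi₁⟩ := hne
  -- generic direction v
  set w : Finset (EuclideanSpace ℝ (Fin d)) :=
    ((Finset.univ ×ˢ Finset.univ).filter fun p : ι × ι => p.1 ≠ p.2).image
      fun p => z p.1 - z p.2 with hw_def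
  have hw0 : (0 : EuclideanSpace ℝ (Fin d)) ∉ w := by
    simp only [hw_def, Finset.mem_image, Finset.mem_filter, Finset.mem_product]
    rintro ⟨⟨p1, p2⟩, ⟨-, hne'⟩, heq⟩
    exact hne' (hz (sub_eq_zero.1 heq))
  obtain ⟨v, hv1, hv⟩ := exists_unit_inner_ne d (by omega) w hw0
  obtain ⟨u, hu1, huv⟩ := exists_unit_orthogonal d hd v
  set α : ι → ℝ := fun i => ⟪z i, u⟫ with hα_def
  set β : ι → ℝ := fun i => ⟪z i, v⟫ with hβ_def
  have hβinj : Function.Injective β := by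
    intro i j hij
    by_contra hne'
    have hmem : z i - z j ∈ w := by
      simp only [hw_def, Finset.mem_image, Finset.mem_filter, Finset.mem_product]
      exact ⟨(i, j), ⟨⟨Finset.mem_univ _, Finset.mem_univ _⟩, fun h => hne' h⟩, rfl⟩
    exact hv _ hmem (by rw [inner_sub_left]; simpa [hβ_def] using sub_eq_zero.2 hij)
  -- the entire function
  set g : ℂ → ℂ := fun t =>
    ∑ i, a i * Complex.exp (Complex.I * ((α i : ℂ) * Complex.cos t + (β i : ℂ) * Complex.sin t))
    with hg_def
  have hgdiff : Differentiable ℂ g := by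
    apply Differentiable.fun_sum
    intro i _
    apply Differentiable.mul (differentiable_const _)
    apply Differentiable.cexp
    apply Differentiable.mul (differentiable_const _)
    exact ((differentiable_const _).mul Complex.differentiable_cos).add
      ((differentiable_const _).mul Complex.differentiable_sin)
  -- g vanishes on the reals
  have hgreal : ∀ x : ℝ, g (x : ℂ) = 0 := by
    intro x
    set θ : EuclideanSpace ℝ (Fin d) := Real.cos x • u + Real.sin x • v with hθ_def
    have hθ1 : ‖θ‖ = 1 := by
      have hsq : ‖θ‖ ^ 2 = 1 := by
        rw [hθ_def, norm_add_sq_real, norm_smul, norm_smul, real_inner_smul_left,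
          real_inner_smul_right, huv]
        rw [hu1, hv1]
        simp only [Real.norm_eq_abs, mul_one, mul_zero, add_zero, sq_abs]
        nlinarith [Real.sin_sq_add_cos_sq x]
      nlinarith [norm_nonneg θ, hsq]
    have hinner : ∀ i, ⟪z i, θ⟫ = Real.cos x * α i + Real.sin x * β i := by
      intro i
      rw [hθ_def, inner_add_right, real_inner_smul_right, real_inner_smul_right]
    have := H θ hθ1
    rw [hg_def, ← this]
    apply Finset.sum_congr rfl
    intro i _
    congr 1
    rw [hinner i]
    push_cast [Complex.ofReal_cos, Complex.ofReal_sin]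
    ring_nf
  -- identity theorem: g vanishes everywhere
  have hgzero : ∀ t : ℂ, g t = 0 := by
    have hga : AnalyticOnNhd ℂ g Set.univ := Complex.analyticOnNhd_univ_iff_differentiable.2 hgdiff
    have h1 : Filter.Tendsto (fun x : ℝ => (x : ℂ)) (𝓝[≠] (0 : ℝ)) (𝓝[≠] (0 : ℂ)) := by
      rw [tendsto_nhdsWithin_iff]
      constructor
      · have := Complex.continuous_ofReal.tendsto (0 : ℝ)
        simpa using this.mono_left nhdsWithin_le_nhds
      · filter_upwards [self_mem_nhdsWithin] with x hx
        simpa using Complex.ofReal_ne_zero.2 hx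
    have hfreq : ∃ᶠ t in 𝓝[≠] (0 : ℂ), g t = 0 :=
      h1.frequently ((Filter.Eventually.of_forall fun x => hgreal x).frequently)
    have := hga.eqOn_zero_of_preconnected_of_frequently_eq_zero isPreconnected_univ
      (Set.mem_univ 0) hfreq
    intro t
    exact this (Set.mem_univ t)
  -- evaluate on the imaginary axis
  have himag : ∀ r : ℝ,
      ∑ i, a i * Complex.exp (Complex.I * (α i : ℂ) * (Real.cosh (Real.arsinh r) : ℂ)
        - (β i : ℂ) * (r : ℂ)) = 0 := by
    intro r
    have := hgzero ((Real.arsinh r : ℝ) * Complex.I)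
    rw [hg_def] at this
    rw [← this]
    apply Finset.sum_congr rfl
    intro i _
    congr 1
    rw [Complex.cos_mul_I, Complex.sin_mul_I, ← Complex.ofReal_cosh, ← Complex.ofReal_sinh,
      Real.sinh_arsinh]
    congr 1
    linear_combination (-(β i : ℂ) * (r : ℂ)) * Complex.I_sq
  -- minimal beta among nonzero coefficients
  set S : Finset ι := Finset.univ.filter fun i => a i ≠ 0 with hS_def
  have hSne : S.Nonempty := ⟨i₁, by simp [hS_def, hi₁]⟩
  obtain ⟨i₀, hi₀S, hmin⟩ := S.exists_min_image β hSne
  have hai₀ : a i₀ ≠ 0 := (Finset.mem_filter.1 hi₀S).2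
  -- the bound
  have hbound : ∀ r : ℝ, ‖a i₀‖ ≤
      ∑ i ∈ S.erase i₀, ‖a i‖ * Real.exp ((β i₀ - β i) * r) := by
    intro r
    set C : ℝ := Real.cosh (Real.arsinh r) with hC_def
    set Ei : ι → ℂ := fun i =>
      Complex.exp (Complex.I * (α i : ℂ) * (C : ℂ) - (β i : ℂ) * (r : ℂ)) with hE_def
    have hnormE : ∀ i, ‖Ei i‖ = Real.exp (-(β i * r)) := by
      intro i
      rw [hE_def]
      simp only [Complex.norm_exp]
      congr 1
      simp [Complex.sub_re, Complex.mul_re, Complex.I_re, Complex.I_im, Complex.ofReal_re,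
        Complex.ofReal_im]
    have hsum : ∑ i ∈ S, a i * Ei i = 0 := by
      rw [← himag r]
      rw [hS_def]
      exact Finset.sum_filter_of_ne fun i _ hne' => by
        intro ha
        exact hne' (by rw [ha, zero_mul])
    have hsplit : a i₀ * Ei i₀ = -∑ i ∈ S.erase i₀, a i * Ei i := by
      have := Finset.add_sum_erase S (fun i => a i * Ei i) hi₀S
      linear_combination this + hsum
    have hnorm1 : ‖a i₀‖ * Real.exp (-(β i₀ * r)) ≤
        ∑ i ∈ S.erase i₀, ‖a i‖ * Real.exp (-(β i * r)) := by
      calc ‖a i₀‖ * Real.exp (-(β i₀ * r)) = ‖a i₀ * Ei i₀‖ := by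
            rw [norm_mul, hnormE]
        _ = ‖∑ i ∈ S.erase i₀, a i * Ei i‖ := by rw [hsplit, norm_neg]
        _ ≤ ∑ i ∈ S.erase i₀, ‖a i * Ei i‖ := norm_sum_le _ _
        _ = ∑ i ∈ S.erase i₀, ‖a i‖ * Real.exp (-(β i * r)) := by
            apply Finset.sum_congr rfl; intro i _; rw [norm_mul, hnormE]
    have hexp : (0:ℝ) < Real.exp (-(β i₀ * r)) := Real.exp_pos _
    rw [← le_div_iff₀ hexp] at hnorm1
    calc ‖a i₀‖ ≤ (∑ i ∈ S.erase i₀, ‖a i‖ * Real.exp (-(β i * r))) /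
          Real.exp (-(β i₀ * r)) := hnorm1
      _ = ∑ i ∈ S.erase i₀, ‖a i‖ * Real.exp ((β i₀ - β i) * r) := by
          rw [Finset.sum_div]
          apply Finset.sum_congr rfl
          intro i _
          rw [mul_div_assoc, ← Real.exp_sub]
          have harg : -(β i * r) - -(β i₀ * r) = (β i₀ - β i) * r := by ring
          rw [harg]
  -- the sum tends to zero
  have htend : Filter.Tendsto
      (fun r : ℝ => ∑ i ∈ S.erase i₀, ‖a i‖ * Real.exp ((β i₀ - β i) * r))
      atTop (nhds 0) := by
    have : (0:ℝ) = ∑ i ∈ S.erase i₀, (0:ℝ) := by simp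
    rw [this]
    apply tendsto_finset_sum
    intro i hi
    have hβlt : β i₀ - β i < 0 := by
      have h1 : β i₀ ≤ β i := hmin i (Finset.mem_of_mem_erase hi)
      have h2 : β i₀ ≠ β i := fun h => (Finset.ne_of_mem_erase hi) (hβinj h).symm
      exact sub_neg.2 (lt_of_le_of_ne h1 h2)
    have h3 : Filter.Tendsto (fun r : ℝ => (β i₀ - β i) * r) atTop atBot :=
      Filter.Tendsto.const_mul_atTop_of_neg hβlt tendsto_id
    have h4 : Filter.Tendsto (fun r : ℝ => Real.exp ((β i₀ - β i) * r)) atTop (nhds 0) :=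
      Real.tendsto_exp_atBot.comp h3
    simpa using h4.const_mul ‖a i‖
  have : ‖a i₀‖ ≤ 0 := ge_of_tendsto' htend hbound |>.trans (le_refl 0)
  exact hai₀ (norm_le_zero_iff.1 this)


private lemma sum_fiber'(d k : ℕ) [DecidableEq (EuclideanSpace ℝ (Fin d))] (T : Finset (EuclideanSpace ℝ (Fin d)))
    (y : Fin k → EuclideanSpace ℝ (Fin d)) (hsub : ∀ j, y j ∈ T) (c : Fin k → ℂ)
    (f : EuclideanSpace ℝ (Fin d) → ℂ) :
    ∑ zz ∈ T, (∑ j ∈ Finset.univ.filter fun j => y j = zz, c j) * f zz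
      = ∑ j, c j * f (y j) := by
  classical
  rw [← Finset.sum_fiberwise_of_maps_to (fun j _ => hsub j) (fun j => c j * f (y j))]
  apply Finset.sum_congr rfl
  intro zz _
  rw [Finset.sum_mul]
  apply Finset.sum_congr rfl
  intro j hj
  rw [(Finset.mem_filter.1 hj).2]

private lemma range_subset_aux (d n m : ℕ) (hd : 2 ≤ d)
    (y : Fin n → EuclideanSpace ℝ (Fin d)) (hy : Function.Injective y)
    (c : Fin n → ℂ) (hc : ∀ j, c j ≠ 0)
    (y' : Fin m → EuclideanSpace ℝ (Fin d)) (hy' : Function.Injective y')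
    (c' : Fin m → ℂ)
    (h : ∀ θ : EuclideanSpace ℝ (Fin d), ‖θ‖ = 1 →
      ∑ j, c j * Complex.exp (Complex.I * (⟪y j, θ⟫ : ℝ)) =
      ∑ j, c' j * Complex.exp (Complex.I * (⟪y' j, θ⟫ : ℝ))) :
    Set.range (fun j => (y j, c j)) ⊆ Set.range (fun k => (y' k, c' k)) := by
  classical
  set T : Finset (EuclideanSpace ℝ (Fin d)) :=
    Finset.univ.image y ∪ Finset.univ.image y' with hT_def
  set A : EuclideanSpace ℝ (Fin d) → ℂ := fun zz =>
    (∑ j ∈ Finset.univ.filter fun j => y j = zz, c j)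
      - ∑ k ∈ Finset.univ.filter fun k => y' k = zz, c' k with hA_def
  have hysub : ∀ j, y j ∈ T := fun j => Finset.mem_union_left _
    (Finset.mem_image_of_mem y (Finset.mem_univ j))
  have hy'sub : ∀ k, y' k ∈ T := fun k => Finset.mem_union_right _
    (Finset.mem_image_of_mem y' (Finset.mem_univ k))
  have hA : ∀ zz ∈ T, A zz = 0 := by
    have hkey := key_indep d hd (ι := {x // x ∈ T}) (fun i => (i : EuclideanSpace ℝ (Fin d)))
      Subtype.val_injective (fun i => A i.1) ?_
    · intro zz hzz
      exact hkey ⟨zz, hzz⟩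
    · intro θ hθ
      rw [Finset.sum_coe_sort T
        (fun zz => A zz * Complex.exp (Complex.I * (⟪zz, θ⟫ : ℝ)))]
      have hexp : ∀ zz ∈ T, A zz * Complex.exp (Complex.I * (⟪zz, θ⟫ : ℝ)) =
          (∑ j ∈ Finset.univ.filter fun j => y j = zz, c j)
              * Complex.exp (Complex.I * (⟪zz, θ⟫ : ℝ))
            - (∑ k ∈ Finset.univ.filter fun k => y' k = zz, c' k)
              * Complex.exp (Complex.I * (⟪zz, θ⟫ : ℝ)) := by
        intro zz _
        rw [hA_def, sub_mul]
      rw [Finset.sum_congr rfl hexp, Finset.sum_sub_distrib,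
        sum_fiber' d n T y hysub c _, sum_fiber' d m T y' hy'sub c' _,
        h θ hθ, sub_self]
  rintro p ⟨j, rfl⟩
  have h0 := hA (y j) (hysub j)
  have hfib1 : (Finset.univ.filter fun j' => y j' = y j) = {j} := by
    ext j'
    simp [hy.eq_iff]
  rw [hA_def] at h0
  simp only [hfib1, Finset.sum_singleton] at h0
  have hcj : c j = ∑ k ∈ Finset.univ.filter fun k => y' k = y j, c' k := sub_eq_zero.1 h0
  have hne : (Finset.univ.filter fun k => y' k = y j).Nonempty := by
    by_contra hempty
    rw [Finset.not_nonempty_iff_eq_empty] at hempty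
    rw [hempty, Finset.sum_empty] at hcj
    exact hc j hcj
  obtain ⟨k, hk⟩ := hne
  have hk' : y' k = y j := (Finset.mem_filter.1 hk).2
  have hfib2 : (Finset.univ.filter fun k' => y' k' = y j) = {k} := by
    ext k'
    simp only [Finset.mem_filter, Finset.mem_univ, true_and, Finset.mem_singleton]
    rw [← hk', hy'.eq_iff]
  rw [hfib2, Finset.sum_singleton] at hcj
  exact ⟨k, by show (y' k, c' k) = (y j, c j); rw [hk', hcj]⟩

/-- Proposition 1: global uniqueness of a multipoint source from its far-field pattern on the
full unit sphere: equal sums of exponentials with distinct nodes and nonzero coefficients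
have the same number of terms and the same set of (node, coefficient) pairs. -/
theorem stmt3 (d n m : ℕ) (hd : 2 ≤ d)
    (y : Fin n → EuclideanSpace ℝ (Fin d)) (hy : Function.Injective y)
    (c : Fin n → ℂ) (hc : ∀ j, c j ≠ 0)
    (y' : Fin m → EuclideanSpace ℝ (Fin d)) (hy' : Function.Injective y')
    (c' : Fin m → ℂ) (hc' : ∀ j, c' j ≠ 0)
    (h : ∀ θ : EuclideanSpace ℝ (Fin d), ‖θ‖ = 1 →
      ∑ j, c j * Complex.exp (Complex.I * (⟪y j, θ⟫ : ℝ)) =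
      ∑ j, c' j * Complex.exp (Complex.I * (⟪y' j, θ⟫ : ℝ))) :
    n = m ∧ Set.range (fun j => (y j, c j)) = Set.range (fun j => (y' j, c' j)) := by
  classical
  have h1 := range_subset_aux d n m hd y hy c hc y' hy' c' h
  have h2 := range_subset_aux d m n hd y' hy' c' hc' y hy c (fun θ hθ => (h θ hθ).symm)
  have hrange : Set.range (fun j => (y j, c j)) = Set.range (fun j => (y' j, c' j)) :=
    Set.Subset.antisymm h1 h2
  refine ⟨?_, hrange⟩
  have hinj : Function.Injective (fun j : Fin n => (y j, c j)) :=
    fun a b hab => hy (congrArg Prod.fst hab)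
  have hinj' : Function.Injective (fun j : Fin m => (y' j, c' j)) :=
    fun a b hab => hy' (congrArg Prod.fst hab)
  have himg : Finset.univ.image (fun j : Fin n => (y j, c j)) =
      Finset.univ.image (fun j : Fin m => (y' j, c' j)) := by
    apply Finset.coe_injective
    simp only [Finset.coe_image, Finset.coe_univ, Set.image_univ]
    exact hrange
  calc n = Fintype.card (Fin n) := (Fintype.card_fin n).symm
    _ = (Finset.univ.image (fun j : Fin n => (y j, c j))).card := by
        rw [Finset.card_image_of_injective _ hinj, Finset.card_univ, Fintype.card_fin]
    _ = (Finset.univ.image (fun j : Fin m => (y' j, c' j))).card := by rw [himg]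
    _ = Fintype.card (Fin m) := by
        rw [Finset.card_image_of_injective _ hinj', Finset.card_univ]
    _ = m := Fintype.card_fin m
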